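/- Let T be a binary tree (each node has at most 2 children) with n nodes, and let l < n be a positive integer. Then T can be partitioned into connected subtrees each with at least l nodes (with the exception of at most one subtree) and at most 3l nodes. -/

import Mathlib

open Finset

namespace BTP

variable {W : Type} {G : SimpleGraph W}

lemma reach_induce {s : Set W} :
    ∀ {u w : W} (p : G.Walk u w) (h : ∀ x ∈ p.support, x ∈ s),
      (G.induce s).Reachable ⟨u, h u p.start_mem_support⟩ ⟨w, h w p.end_mem_support⟩ := by
  intro u w p
  induction p with
  | nil => intro h; exact SimpleGraph.Reachable.refl _
  | @cons u b w hadj q ih =>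
      intro h
      have hb : b ∈ s := h b (by simp)
      refine (SimpleGraph.Adj.reachable ?_).trans
        (ih (fun x hx => h x (by simp [hx])))
      · exact hadj

lemma connected_induce_of {s : Set W} {a : W} (ha : a ∈ s)
    (h : ∀ w, w ∈ s → ∃ p : G.Walk a w, ∀ x ∈ p.support, x ∈ s) :
    (G.induce s).Connected := by
  rw [SimpleGraph.connected_iff]
  refine ⟨fun x y => ?_, ⟨⟨a, ha⟩⟩⟩
  obtain ⟨p, hp⟩ := h x.1 x.2
  obtain ⟨q, hq⟩ := h y.1 y.2
  exact (reach_induce p hp).symm.trans (reach_induce q hq)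

lemma isAcyclic_induce (hG : G.IsAcyclic) (s : Set W) : (G.induce s).IsAcyclic := by
  intro v c hc
  exact hG (c.map (SimpleGraph.Embedding.induce s).toHom)
    (hc.map (fun a b hab => Subtype.ext hab))

lemma dist_add_of_mem_support [DecidableEq W] (hconn : G.Connected) {u w x : W} (p : G.Walk u w)
    (hp : p.length = G.dist u w) (hx : x ∈ p.support) :
    G.dist u x + G.dist x w = G.dist u w := by
  have h1 := SimpleGraph.dist_le (p.takeUntil x hx)
  have h2 := SimpleGraph.dist_le (p.dropUntil x hx)
  have h3 : (p.takeUntil x hx).length + (p.dropUntil x hx).length = p.length := by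
    rw [← SimpleGraph.Walk.length_append, p.take_spec hx]
  have h4 := hconn.dist_triangle (u := u) (v := x) (w := w)
  omega

lemma connected_induce_image (T : SimpleGraph W) (s : Set W) (t : Set ↥s)
    (h : ((T.induce s).induce t).Connected) :
    (T.induce (Subtype.val '' t)).Connected := by
  refine h.map ⟨fun x => ⟨x.1.1, ⟨x.1, x.2, rfl⟩⟩, fun hab => hab⟩ ?_
  rintro ⟨w, y, hy, rfl⟩
  exact ⟨⟨y, hy⟩, rfl⟩

lemma key_lemma {W : Type} [Fintype W] [DecidableEq W] (G : SimpleGraph W)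
    (hG : G.IsTree)
    (hdeg : ∀ (v : W) (s : Finset W), (∀ x ∈ s, G.Adj v x) → s.card ≤ 3)
    (l : ℕ) (hl : 1 ≤ l) (hn : 3 * l < Fintype.card W) :
    ∃ S : Finset W, l ≤ S.card ∧ S.card ≤ 2 * l ∧
      (G.induce ↑S).Connected ∧ (G.induce ↑(Sᶜ)).Connected := by
  classical
  have hconn := hG.isConnected
  obtain ⟨r⟩ : Nonempty W := Fintype.card_pos_iff.mp (by omega)
  have htri : ∀ u v w, G.dist u w ≤ G.dist u v + G.dist v w := fun u v w => hconn.dist_triangle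
  have hcomm : ∀ u v, G.dist u v = G.dist v u := fun u v => SimpleGraph.dist_comm
  have hzero : ∀ u v : W, G.dist u v = 0 ↔ u = v := fun u v => hconn.dist_eq_zero_iff
  have hgeo : ∀ u v : W, ∃ p : G.Walk u v, p.length = G.dist u v :=
    hconn.exists_walk_length_eq_dist
  set sub : W → Finset W := fun v => univ.filter (fun w => G.dist r v + G.dist v w = G.dist r w) with hsub
  have hmem : ∀ {v w : W}, w ∈ sub v ↔ G.dist r v + G.dist v w = G.dist r w := by
    intro v w; simp [hsub]
  have hself : ∀ v, v ∈ sub v := by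
    intro v; rw [hmem]; simp [SimpleGraph.dist_self]
  have hsubr : sub r = univ := by
    ext w; simp [hsub, SimpleGraph.dist_self]
  -- geodesics from v stay in sub v
  have hgeo_in : ∀ v w, w ∈ sub v → ∀ (p : G.Walk v w), p.length = G.dist v w →
      ∀ x ∈ p.support, x ∈ sub v := by
    intro v w hw p hp x hx
    have h1 := dist_add_of_mem_support hconn p hp hx
    rw [hmem] at hw ⊢
    have t1 := htri r v x
    have t2 := htri r x w
    omega
  have hconnS : ∀ v, (G.induce (↑(sub v) : Set W)).Connected := by
    intro v
    refine connected_induce_of (a := v) (by exact_mod_cast hself v) ?_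
    intro w hw
    obtain ⟨p, hp⟩ := hgeo v w
    exact ⟨p, fun x hx => hgeo_in v w (by exact_mod_cast hw) p hp x hx⟩
  have hr_not : ∀ {v : W}, v ≠ r → r ∉ sub v := by
    intro v hv h
    rw [hmem] at h
    have h0 : G.dist r r = 0 := SimpleGraph.dist_self
    have h1 : G.dist r v = 0 := by omega
    exact hv ((hzero r v).mp h1).symm
  have hconnC : ∀ v : W, v ≠ r → (G.induce (↑((sub v)ᶜ) : Set W)).Connected := by
    intro v hv
    have hrc : r ∈ ((↑((sub v)ᶜ)) : Set W) := by
      simp only [coe_compl, Set.mem_compl_iff, mem_coe]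
      exact hr_not hv
    refine connected_induce_of (a := r) hrc ?_
    intro w hw
    have hw' : w ∉ sub v := by
      simpa only [coe_compl, Set.mem_compl_iff, mem_coe] using hw
    obtain ⟨p, hp⟩ := hgeo r w
    refine ⟨p, fun x hx => ?_⟩
    simp only [coe_compl, Set.mem_compl_iff, mem_coe]
    intro hxin
    apply hw'
    have h1 := dist_add_of_mem_support hconn p hp hx
    rw [hmem] at hxin ⊢
    have t1 := htri v x w
    have t2 := htri r v w
    omega
  -- children
  set children : W → Finset W := fun v => (sub v).filter (fun c => G.Adj v c) with hch
  have hchmem : ∀ {v c : W}, c ∈ children v ↔ c ∈ sub v ∧ G.Adj v c := by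
    intro v c; simp [hch]
  have hdecomp : ∀ v, sub v ⊆ insert v ((children v).biUnion sub) := by
    intro v w hw
    by_cases hwv : w = v
    · simp [hwv]
    obtain ⟨p, hp⟩ := hgeo v w
    cases p with
    | nil => exact absurd rfl (Ne.symm hwv)
    | @cons _ c _ hadj q =>
      have hq := SimpleGraph.dist_le q
      have hlen : q.length + 1 = G.dist v w := by
        simpa [SimpleGraph.Walk.length_cons] using hp
      have hcv : c ≠ v := by
        rintro rfl
        omega
      have hvc : G.dist v c = 1 := by
        have hle := SimpleGraph.dist_le hadj.toWalk
        have hne : G.dist v c ≠ 0 := fun h => hcv ((hzero v c).mp h).symm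
        simp only [SimpleGraph.Walk.length_cons, SimpleGraph.Walk.length_nil] at hle
        omega
      have hdcw : G.dist c w + 1 = G.dist v w := by
        have := htri v c w
        omega
      rw [hmem] at hw
      have t1 := htri r v c
      have t2 := htri r c w
      have hc_sub : c ∈ sub v := by rw [hmem]; omega
      have hw_subc : w ∈ sub c := by rw [hmem]; omega
      exact mem_insert_of_mem (mem_biUnion.mpr
        ⟨c, hchmem.mpr ⟨hc_sub, hadj⟩, hw_subc⟩)
  have hcard_le : ∀ v, (sub v).card ≤ 1 + ∑ c ∈ children v, (sub c).card := by
    intro v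
    calc (sub v).card ≤ (insert v ((children v).biUnion sub)).card :=
          card_le_card (hdecomp v)
      _ ≤ 1 + ((children v).biUnion sub).card := by
          have := card_insert_le v ((children v).biUnion sub); omega
      _ ≤ 1 + ∑ c ∈ children v, (sub c).card := by
          have := card_biUnion_le (s := children v) (t := sub); omega
  have hchcard : ∀ v, (children v).card ≤ 3 := by
    intro v
    exact hdeg v (children v) (fun x hx => (hchmem.mp hx).2)
  have hparent : ∀ v : W, v ≠ r → (children v).card ≤ 2 := by
    intro v hv
    obtain ⟨p, hp⟩ := hgeo v r
    cases p with
    | nil => exact absurd rfl hv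
    | @cons _ c _ hadj q =>
      have hq := SimpleGraph.dist_le q
      have hlen : q.length + 1 = G.dist v r := by
        simpa [SimpleGraph.Walk.length_cons] using hp
      have hcv : c ≠ v := by rintro rfl; omega
      have hvc : G.dist v c = 1 := by
        have hle := SimpleGraph.dist_le hadj.toWalk
        have hne : G.dist v c ≠ 0 := fun h => hcv ((hzero v c).mp h).symm
        simp only [SimpleGraph.Walk.length_cons, SimpleGraph.Walk.length_nil] at hle
        omega
      have hcnot : c ∉ children v := by
        intro hc
        have hcs := (hchmem.mp hc).1
        rw [hmem] at hcs
        have e1 : G.dist c r ≤ q.length := hq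
        have e2 := htri v c r
        have e3 : G.dist r c = G.dist c r := hcomm r c
        have e4 : G.dist r v = G.dist v r := hcomm r v
        omega
      have := hdeg v (insert c (children v)) (by
        intro x hx
        rcases mem_insert.mp hx with rfl | hx
        · exact hadj
        · exact (hchmem.mp hx).2)
      rw [card_insert_of_notMem hcnot] at this
      omega
  -- choose v maximizing distance among big subtrees
  have hM : r ∈ univ.filter (fun v => l ≤ (sub v).card) := by
    simp only [mem_filter, mem_univ, true_and, hsubr, card_univ]
    omega
  obtain ⟨v, hvM, hvmax⟩ := exists_max_image (univ.filter (fun v => l ≤ (sub v).card))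
    (fun v => G.dist r v) ⟨r, hM⟩
  have hvl : l ≤ (sub v).card := (mem_filter.mp hvM).2
  have hchild_small : ∀ c ∈ children v, (sub c).card ≤ l - 1 := by
    intro c hc
    obtain ⟨hcs, hcadj⟩ := hchmem.mp hc
    by_contra hcon
    have hcl : l ≤ (sub c).card := by omega
    have hcM : c ∈ univ.filter (fun v => l ≤ (sub v).card) := by
      simp [hcl]
    have hle := hvmax c hcM
    rw [hmem] at hcs
    have hvc : G.dist v c ≠ 0 := fun h => hcadj.ne ((hzero v c).mp h)
    omega
  have hsum : ∑ c ∈ children v, (sub c).card ≤ (children v).card * (l - 1) := by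
    have := Finset.sum_le_card_nsmul (children v) (fun c => (sub c).card) (l - 1)
      hchild_small
    simpa using this
  have hvr : v ≠ r := by
    rintro rfl
    have h1 := hcard_le v
    have h2 := hchcard v
    have h3 : (sub v).card = Fintype.card W := by rw [hsubr, card_univ]
    have : ∑ c ∈ children v, (sub c).card ≤ 3 * (l - 1) :=
      hsum.trans (Nat.mul_le_mul_right _ h2)
    omega
  refine ⟨sub v, hvl, ?_, hconnS v, hconnC v hvr⟩
  have h1 := hcard_le v
  have h2 := hparent v hvr
  have : ∑ c ∈ children v, (sub c).card ≤ 2 * (l - 1) :=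
    hsum.trans (Nat.mul_le_mul_right _ h2)
  omega




lemma aux {V : Type} [Fintype V] [DecidableEq V] (T : SimpleGraph V)
    (hac : T.IsAcyclic)
    (hdeg : ∀ (v : V) (s : Finset V), (∀ x ∈ s, T.Adj v x) → s.card ≤ 3) :
    ∀ (n : ℕ) (A : Finset V), A.card = n →
      (T.induce (↑A : Set V)).Connected → ∀ l, 1 ≤ l → l ≤ n →
      ∃ P : Finpartition A, (∀ p ∈ P.parts, l ≤ p.card ∧ p.card ≤ 3 * l) ∧
        ∀ p ∈ P.parts, (T.induce (↑p : Set V)).Connected := by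
  intro n
  induction n using Nat.strong_induction_on with
  | _ n ih =>
    intro A hA hconnA l hl hln
    classical
    by_cases hbig : A.card ≤ 3 * l
    · have hAne : A ≠ ⊥ := by
        rw [Finset.bot_eq_empty, ← Finset.nonempty_iff_ne_empty]
        exact Finset.card_pos.mp (by omega)
      refine ⟨Finpartition.indiscrete hAne, ?_, ?_⟩
      · intro p hp
        rw [Finpartition.indiscrete_parts, mem_singleton] at hp
        subst hp
        omega
      · intro p hp
        rw [Finpartition.indiscrete_parts, mem_singleton] at hp
        subst hp
        exact hconnA
    · have hcardA : Fintype.card ↥(↑A : Set V) = A.card := by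
        simpa using Fintype.card_coe A
      have hTree : (T.induce (↑A : Set V)).IsTree :=
        ⟨hconnA, isAcyclic_induce hac _⟩
      have hdeg' : ∀ (v : ↥(↑A : Set V)) (s : Finset ↥(↑A : Set V)),
          (∀ x ∈ s, (T.induce (↑A : Set V)).Adj v x) → s.card ≤ 3 := by
        intro v s hs
        have := hdeg v.1 (s.map ⟨Subtype.val, Subtype.val_injective⟩) ?_
        · simpa using this
        · intro x hx
          rw [Finset.mem_map] at hx
          obtain ⟨y, hy, rfl⟩ := hx
          exact hs y hy
      obtain ⟨S, hSl, hSu, hSconn, hScconn⟩ := key_lemma (T.induce (↑A : Set V))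
        hTree hdeg' l hl (by omega)
      set S' : Finset V := S.map ⟨Subtype.val, Subtype.val_injective⟩ with hS'
      have hS'A : S' ⊆ A := by
        intro x hx
        rw [hS', Finset.mem_map] at hx
        obtain ⟨y, hy, rfl⟩ := hx
        exact y.2
      have hS'card : S'.card = S.card := Finset.card_map _
      have hcoeS : (↑S' : Set V) = Subtype.val '' (↑S : Set ↥(↑A : Set V)) := by
        rw [hS']; exact Finset.coe_map _ _
      have hconnS' : (T.induce (↑S' : Set V)).Connected := by
        rw [hcoeS]
        exact connected_induce_image T _ _ hSconn
      have hcoeC : (↑(A \ S') : Set V) = Subtype.val '' (↑(Sᶜ) : Set ↥(↑A : Set V)) := by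
        ext x
        simp only [Finset.coe_sdiff, Set.mem_diff, Finset.mem_coe, Set.mem_image,
          Finset.coe_compl, Set.mem_compl_iff]
        constructor
        · rintro ⟨hxA, hxS⟩
          refine ⟨⟨x, hxA⟩, ?_, rfl⟩
          intro hmem
          exact hxS (by rw [hS', Finset.mem_map]; exact ⟨⟨x, hxA⟩, hmem, rfl⟩)
        · rintro ⟨y, hy, rfl⟩
          refine ⟨y.2, ?_⟩
          intro hmem
          rw [hS', Finset.mem_map] at hmem
          obtain ⟨z, hz, hzval⟩ := hmem
          exact hy (by rwa [Subtype.ext hzval] at hz)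
      have hconnC : (T.induce (↑(A \ S') : Set V)).Connected := by
        rw [hcoeC]
        exact connected_induce_image T _ _ hScconn
      have hCcard : (A \ S').card = n - S.card := by
        rw [Finset.card_sdiff_of_subset hS'A, hS'card, hA]
      obtain ⟨P', hP'1, hP'2⟩ := ih (n - S.card) (by omega) (A \ S') hCcard hconnC
        l hl (by omega)
      have hS'ne : S' ≠ ⊥ := by
        rw [Finset.bot_eq_empty, ← Finset.nonempty_iff_ne_empty]
        exact Finset.card_pos.mp (by omega)
      have hdisj : Disjoint (A \ S') S' := Finset.sdiff_disjoint
      have hsup : (A \ S') ⊔ S' = A := by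
        rw [Finset.sup_eq_union, Finset.sdiff_union_of_subset hS'A]
      refine ⟨P'.extend hS'ne hdisj hsup, ?_, ?_⟩
      · intro p hp
        rw [Finpartition.extend_parts, mem_insert] at hp
        rcases hp with rfl | hp
        · omega
        · exact hP'1 p hp
      · intro p hp
        rw [Finpartition.extend_parts, mem_insert] at hp
        rcases hp with rfl | hp
        · exact hconnS'
        · exact hP'2 p hp



end BTP

theorem binary_tree_partition {V : Type} [Fintype V] [DecidableEq V]
    (T : SimpleGraph V) [DecidableRel T.Adj] (hT : T.IsTree)
    (r : V) (hdeg : ∀ v : V, T.degree v ≤ 3) (hroot : T.degree r ≤ 2)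
    (n l : ℕ) (hn : Fintype.card V = n) (hl : 1 ≤ l) (hln : l < n) :
    ∃ P : Finpartition (Finset.univ : Finset V),
      (∀ part ∈ P.parts, part.card ≤ 3 * l) ∧
      (∀ part ∈ P.parts, (SimpleGraph.induce (↑part : Set V) T).Connected) ∧
      (P.parts.filter (fun part => part.card < l)).card ≤ 1 := by
  classical
  have hdeg' : ∀ (v : V) (s : Finset V), (∀ x ∈ s, T.Adj v x) → s.card ≤ 3 := by
    intro v s hs
    refine le_trans (Finset.card_le_card ?_) (hdeg v)
    intro x hx
    rw [SimpleGraph.mem_neighborFinset]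
    exact hs x hx
  have hconnU : (T.induce (↑(Finset.univ : Finset V) : Set V)).Connected := by
    rw [Finset.coe_univ]
    exact (SimpleGraph.induceUnivIso T).connected_iff.mpr hT.isConnected
  have hcardU : (Finset.univ : Finset V).card = n := by
    rw [Finset.card_univ, hn]
  obtain ⟨P, h1, h2⟩ := BTP.aux T hT.IsAcyclic hdeg' n Finset.univ hcardU hconnU l hl
    (by omega)
  refine ⟨P, fun p hp => (h1 p hp).2, h2, ?_⟩
  have hempty : P.parts.filter (fun p => p.card < l) = ∅ := by
    rw [Finset.filter_eq_empty_iff]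
    intro p hp
    exact not_lt.mpr (h1 p hp).1
  simp [hempty]
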